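/- Inductive reduction for WSK ergodicity: Let q ≥ 3 and let G be bipartite. If two proper q-colorings σ, σ' of G agree on the set S = {x : σ_x = q} (i.e. σ'_x = q exactly when σ_x = q), and if the WSK algorithm for (q−1)-colorings is ergodic on the subgraph of G induced by V ∖ S, then σ can be transformed into σ' by WSK moves using only color pairs from {1,…,q−1}. -/

import Mathlib

/-- Lift a coloring of the subtype `{x // σ x ≠ q}` to all of `V`, coloring the
remaining vertices with `q`. -/
def liftColoring {V : Type*} (σ : V → ℕ) (q : ℕ) (c : {x : V // σ x ≠ q} → ℕ) : V → ℕ :=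
  fun x => if h : σ x = q then q else c ⟨x, h⟩


/-- `c` is a proper `q`-coloring of `G` with colors in `{1,…,q}`. -/
def ProperColoring {V : Type*} (G : SimpleGraph V) (q : ℕ) (c : V → ℕ) : Prop :=
  (∀ x, c x ∈ Finset.Icc 1 q) ∧ ∀ u v, G.Adj u v → c u ≠ c v

/-- A zero-temperature WSK move with color pair `(i,j)`: interchange `i` and `j` on a
set `S` which is a union of connected components of the subgraph induced by the
vertices colored `i` or `j`. -/
def WSKPairMove {V : Type*} [DecidableEq V] (G : SimpleGraph V) (i j : ℕ)
    (c c' : V → ℕ) : Prop :=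
  ∃ S : Finset V,
    (∀ x ∈ S, c x = i ∨ c x = j) ∧
    (∀ x ∈ S, ∀ y, G.Adj x y → (c y = i ∨ c y = j) → y ∈ S) ∧
    ∀ x, c' x = if x ∈ S then (if c x = i then j else if c x = j then i else c x) else c x

/-- A zero-temperature WSK move using some pair of distinct colors from `{1,…,q}`. -/
def WSKMove {V : Type*} [DecidableEq V] (G : SimpleGraph V) (q : ℕ)
    (c c' : V → ℕ) : Prop :=
  ∃ i ∈ Finset.Icc 1 q, ∃ j ∈ Finset.Icc 1 q, i ≠ j ∧ WSKPairMove G i j c c'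

/-- inductive reduction for WSK ergodicity: let `q ≥ 3` and `G`
bipartite. If two proper `q`-colorings `σ, σ'` agree on the set `S = {x : σ_x = q}`
(i.e. `σ'_x = q` exactly when `σ_x = q`), and the WSK algorithm for `(q−1)`-colorings
is ergodic on the subgraph induced by `V ∖ S`, then `σ` can be transformed into `σ'`
by WSK moves using only color pairs from `{1,…,q−1}`. -/
theorem wsk_inductive_reduction
    {V : Type*} [Fintype V] [DecidableEq V] (G : SimpleGraph V)
    (hbip : G.Colorable 2)
    (q : ℕ) (hq : 3 ≤ q) (σ σ' : V → ℕ)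
    (hσ : ProperColoring G q σ) (hσ' : ProperColoring G q σ')
    (hagree : ∀ x, σ x = q ↔ σ' x = q)
    (hind : ∀ c c' : {x : V // σ x ≠ q} → ℕ,
      ProperColoring (SimpleGraph.induce {x : V | σ x ≠ q} G) (q - 1) c →
      ProperColoring (SimpleGraph.induce {x : V | σ x ≠ q} G) (q - 1) c' →
      Relation.ReflTransGen
        (WSKMove (SimpleGraph.induce {x : V | σ x ≠ q} G) (q - 1)) c c') :
    Relation.ReflTransGen (WSKMove G (q - 1)) σ σ' := by
  -- lifting a WSK move on the induced subgraph to G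
  have lift_move : ∀ c c' : {x : V // σ x ≠ q} → ℕ,
      WSKMove (SimpleGraph.induce {x : V | σ x ≠ q} G) (q - 1) c c' →
      WSKMove G (q - 1) (liftColoring σ q c) (liftColoring σ q c') := by
    rintro c c' ⟨i, hi, j, hj, hij, S, h1, h2, h3⟩
    simp only [Finset.mem_Icc] at hi hj
    have hiq : i ≠ q := by omega
    have hjq : j ≠ q := by omega
    refine ⟨i, by simp [Finset.mem_Icc]; omega, j, by simp [Finset.mem_Icc]; omega, hij,
      S.image Subtype.val, ?_, ?_, ?_⟩
    · rintro x hx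
      obtain ⟨a, ha, rfl⟩ := Finset.mem_image.mp hx
      have : liftColoring σ q c a.val = c a := by
        have hp : σ a.val ≠ q := a.prop
        simp [liftColoring, hp]
      rw [this]; exact h1 a ha
    · rintro x hx y hxy hy
      obtain ⟨a, ha, rfl⟩ := Finset.mem_image.mp hx
      have hyq : σ y ≠ q := by
        intro h
        simp [liftColoring, h] at hy
        tauto
      have hval : liftColoring σ q c y = c ⟨y, hyq⟩ := by simp [liftColoring, hyq]
      rw [hval] at hy
      have hadj : (SimpleGraph.induce {x : V | σ x ≠ q} G).Adj a ⟨y, hyq⟩ := hxy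
      have := h2 a ha ⟨y, hyq⟩ hadj hy
      exact Finset.mem_image.mpr ⟨⟨y, hyq⟩, this, rfl⟩
    · intro x
      by_cases hx : σ x = q
      · have hxnot : x ∉ S.image Subtype.val := by
          intro hmem
          obtain ⟨a, ha, rfl⟩ := Finset.mem_image.mp hmem
          exact a.prop hx
        simp [liftColoring, hx, hxnot]
      · have hval : liftColoring σ q c x = c ⟨x, hx⟩ := by simp [liftColoring, hx]
        have hval' : liftColoring σ q c' x = c' ⟨x, hx⟩ := by simp [liftColoring, hx]
        by_cases hmem : (⟨x, hx⟩ : {x : V // σ x ≠ q}) ∈ S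
        · have hmem' : x ∈ S.image Subtype.val := Finset.mem_image.mpr ⟨_, hmem, rfl⟩
          rw [hval', h3 ⟨x, hx⟩, if_pos hmem, if_pos hmem', hval]
        · have hmem' : x ∉ S.image Subtype.val := by
            intro h
            obtain ⟨a, ha, hav⟩ := Finset.mem_image.mp h
            have : a = ⟨x, hx⟩ := Subtype.ext hav
            exact hmem (this ▸ ha)
          rw [hval', h3 ⟨x, hx⟩, if_neg hmem, if_neg hmem', hval]
  -- restrictions are proper (q-1)-colorings
  set r : {x : V // σ x ≠ q} → ℕ := fun x => σ x with hr
  set r' : {x : V // σ x ≠ q} → ℕ := fun x => σ' x with hr'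
  have hrp : ProperColoring (SimpleGraph.induce {x : V | σ x ≠ q} G) (q - 1) r := by
    constructor
    · intro x
      have h1 : 1 ≤ σ x.val ∧ σ x.val ≤ q := Finset.mem_Icc.mp (hσ.1 x.val)
      have h2 : σ x.val ≠ q := x.prop
      show σ x.val ∈ Finset.Icc 1 (q - 1)
      exact Finset.mem_Icc.mpr ⟨h1.1, by omega⟩
    · intro u v huv
      exact hσ.2 u.val v.val huv
  have hrp' : ProperColoring (SimpleGraph.induce {x : V | σ x ≠ q} G) (q - 1) r' := by
    constructor
    · intro x
      have h1 : 1 ≤ σ' x.val ∧ σ' x.val ≤ q := Finset.mem_Icc.mp (hσ'.1 x.val)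
      have h2 : σ' x.val ≠ q := fun h => x.prop ((hagree x.val).mpr h)
      show σ' x.val ∈ Finset.Icc 1 (q - 1)
      exact Finset.mem_Icc.mpr ⟨h1.1, by omega⟩
    · intro u v huv
      exact hσ'.2 u.val v.val huv
  have hchain := hind r r' hrp hrp'
  have hlift : Relation.ReflTransGen (WSKMove G (q - 1)) (liftColoring σ q r) (liftColoring σ q r') := Relation.ReflTransGen.lift (liftColoring σ q) lift_move r r' hchain
  have e1 : liftColoring σ q r = σ := by
    funext x
    by_cases hx : σ x = q <;> simp [liftColoring, hx, hr]
  have e2 : liftColoring σ q r' = σ' := by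
    funext x
    by_cases hx : σ x = q
    · simp [liftColoring, hx, ((hagree x).mp hx).symm]
    · simp [liftColoring, hx, hr']
  rwa [e1, e2] at hlift
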